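/- For every tree T on n vertices and every positive integer j ≤ n, there exists a set W of at most j vertices of T such that every vertex of T is at distance at most ⌈n/(j+1)⌉ from some vertex of W. In other words, the j-radius of T satisfies r_j(T) ≤ ⌈n/(j+1)⌉. -/

import Mathlib

open SimpleGraph
set_option linter.unusedSectionVars false

section Aux
variable {V : Type*} [DecidableEq V] {G : SimpleGraph V}

private lemma tree_len_eq_dist (hT : G.IsTree) {x y : V} (p : G.Walk x y) (hp : p.IsPath) :
    p.length = G.dist x y := by
  obtain ⟨q, hq⟩ := hT.isConnected.exists_walk_length_eq_dist x y
  have hb : q.bypass.IsPath := q.bypass_isPath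
  have hpe : p = q.bypass := ((hT.existsUnique_path x y).unique hp hb)
  have h1 : p.length ≤ q.length := hpe ▸ q.length_bypass_le
  have h2 := SimpleGraph.dist_le p
  omega

noncomputable def pth (hT : G.IsTree) (x y : V) : G.Walk x y :=
  (hT.existsUnique_path x y).exists.choose

private lemma pth_isPath (hT : G.IsTree) (x y : V) : (pth hT x y).IsPath :=
  (hT.existsUnique_path x y).exists.choose_spec

private lemma pth_eq (hT : G.IsTree) {x y : V} (p : G.Walk x y) (hp : p.IsPath) :
    p = pth hT x y :=
  (hT.existsUnique_path x y).unique hp (pth_isPath hT x y)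

private lemma length_pth (hT : G.IsTree) (x y : V) : (pth hT x y).length = G.dist x y :=
  tree_len_eq_dist hT _ (pth_isPath hT x y)

private lemma dist_split (hT : G.IsTree) {z x y : V} (hy : y ∈ (pth hT z x).support) :
    G.dist z y + G.dist y x = G.dist z x := by
  have h1 := tree_len_eq_dist hT _ ((pth_isPath hT z x).takeUntil hy)
  have h2 := tree_len_eq_dist hT _ ((pth_isPath hT z x).dropUntil hy)
  have h3 := congrArg SimpleGraph.Walk.length ((pth hT z x).take_spec hy)
  rw [SimpleGraph.Walk.length_append] at h3
  rw [length_pth] at h3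
  omega

/-- If `q` is a path from `z` to `v`, `y` on it, and `v` lies on the tree-path from
`z` to `y`, then `y = v`. -/
private lemma mem_prefix (hT : G.IsTree) {z v y : V} (q : G.Walk z v) (hq : q.IsPath)
    (hy : y ∈ q.support) (hv : v ∈ (pth hT z y).support) : y = v := by
  have ht : q.takeUntil y hy = pth hT z y := pth_eq hT _ (hq.takeUntil hy)
  rw [← ht] at hv
  have hspec := q.take_spec hy
  have hnodup : q.support.Nodup := hq.support_nodup
  rw [← hspec, SimpleGraph.Walk.support_append] at hnodup
  have hdisj := List.disjoint_of_nodup_append hnodup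
  have hv2 : v ∈ (q.dropUntil y hy).support := SimpleGraph.Walk.end_mem_support _
  rcases (SimpleGraph.Walk.mem_support_iff _).mp hv2 with h | h
  · exact h.symm
  · exact absurd h (hdisj hv)

private lemma exists_split {x y : V} (p : G.Walk x y) (k : ℕ) (hk : k ≤ p.length) :
    ∃ (v : V) (q1 : G.Walk x v) (q2 : G.Walk v y), q1.append q2 = p ∧ q2.length = k := by
  induction p with
  | nil =>
    refine ⟨_, .nil, .nil, rfl, ?_⟩
    have hk0 : k = 0 := Nat.le_zero.mp (by simpa using hk)
    simp [hk0]
  | @cons a b c h q ih =>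
    rcases eq_or_lt_of_le hk with heq | hlt
    · exact ⟨a, .nil, .cons h q, rfl, heq.symm⟩
    · have hk' : k ≤ q.length := by
        simp only [SimpleGraph.Walk.length_cons] at hlt; omega
      obtain ⟨v, q1, q2, happ, hlen⟩ := ih hk'
      exact ⟨v, .cons h q1, q2, by rw [SimpleGraph.Walk.cons_append, happ], hlen⟩

end Aux
section Key
variable {V : Type*} [DecidableEq V] {G : SimpleGraph V}

private lemma key (hT : G.IsTree) (r : ℕ) :
    ∀ (N : ℕ) (S : Finset V) (z : V), S.card ≤ N → z ∈ S →
      (∀ x ∈ S, ∀ y ∈ (pth hT z x).support, y ∈ S) → r + 1 ≤ S.card →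
      ∃ D : Finset V, (r + 1) * D.card ≤ S.card ∧ ∀ x ∈ S, ∃ c ∈ D, G.dist c x ≤ r := by
  intro N
  induction N with
  | zero => intro S z hN _ _ hcard; omega
  | succ N ih =>
    intro S z hN hz hcl hcard
    have hSne : S.Nonempty := Finset.card_pos.mp (by omega)
    obtain ⟨u, huS, hmax⟩ := S.exists_max_image (fun x => G.dist z x) hSne
    by_cases hdu : G.dist z u ≤ r
    · refine ⟨{z}, by simpa using hcard, fun x hx => ⟨z, Finset.mem_singleton_self z, ?_⟩⟩
      exact le_trans (hmax x hx) hdu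
    · push_neg at hdu
      set p := pth hT z u with hpdef
      have hp : p.IsPath := pth_isPath hT z u
      have hplen : p.length = G.dist z u := length_pth hT z u
      obtain ⟨v, q1, q2, happ, hq2len⟩ := exists_split p r (by omega)
      have hq1q2 : q1.length + q2.length = p.length := by
        rw [← happ, SimpleGraph.Walk.length_append]
      have happ' : (q1.append q2).IsPath := by rw [happ]; exact hp
      have hq1path : q1.IsPath := happ'.of_append_left
      have hq2path : q2.IsPath := happ'.of_append_right
      have hq1len : q1.length = G.dist z v := tree_len_eq_dist hT q1 hq1path
      have hdzv : G.dist z v + r = G.dist z u := by omega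
      have hvne : v ≠ z := by
        intro h; subst h
        rw [SimpleGraph.dist_self] at hdzv; omega
      have hvS : v ∈ S := by
        refine hcl u huS v ?_
        rw [← hpdef, ← happ]
        exact (SimpleGraph.Walk.mem_support_append_iff _ _).mpr
          (Or.inl (SimpleGraph.Walk.end_mem_support q1))
      set Tv := S.filter (fun x => v ∈ (pth hT z x).support) with hTvdef
      set R := S \ Tv with hRdef
      have hTvsub : Tv ⊆ S := Finset.filter_subset _ _
      have hcardsum : Tv.card + R.card = S.card := by
        rw [hRdef, Finset.card_sdiff_of_subset hTvsub]
        have := Finset.card_le_card hTvsub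
        omega
      -- every x in Tv is within r of v
      have hTvdom : ∀ x ∈ Tv, G.dist v x ≤ r := by
        intro x hx
        rw [hTvdef, Finset.mem_filter] at hx
        obtain ⟨hxS, hvx⟩ := hx
        have hsp := dist_split hT hvx
        have := hmax x hxS
        omega
      -- support of q2 is inside Tv
      have hq2sub : ∀ y ∈ q2.support, y ∈ Tv := by
        intro y hy
        have hyS : y ∈ S := by
          refine hcl u huS y ?_
          rw [← hpdef, ← happ]
          exact (SimpleGraph.Walk.mem_support_append_iff _ _).mpr (Or.inr hy)
        rw [hTvdef, Finset.mem_filter]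
        refine ⟨hyS, ?_⟩
        have hpre : (q1.append (q2.takeUntil y hy)).IsPath := by
          have : ((q1.append (q2.takeUntil y hy)).append (q2.dropUntil y hy)).IsPath := by
            rw [← SimpleGraph.Walk.append_assoc, q2.take_spec hy, happ]; exact hp
          exact this.of_append_left
        have := pth_eq hT _ hpre
        rw [← this]
        exact (SimpleGraph.Walk.mem_support_append_iff _ _).mpr
          (Or.inl (SimpleGraph.Walk.end_mem_support q1))
      have hvTv : v ∈ Tv := hq2sub v (SimpleGraph.Walk.start_mem_support q2)
      have hTvcard : r + 1 ≤ Tv.card := by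
        have hnd : q2.support.Nodup := hq2path.support_nodup
        have hsub : q2.support.toFinset ⊆ Tv := fun y hy => hq2sub y (List.mem_toFinset.mp hy)
        have h1 : q2.support.toFinset.card = r + 1 := by
          rw [List.toFinset_card_of_nodup hnd, SimpleGraph.Walk.length_support, hq2len]
        calc r + 1 = q2.support.toFinset.card := h1.symm
          _ ≤ Tv.card := Finset.card_le_card hsub
      have hzR : z ∈ R := by
        rw [hRdef, Finset.mem_sdiff]
        refine ⟨hz, fun hcon => ?_⟩
        rw [hTvdef, Finset.mem_filter] at hcon
        exact hvne (mem_prefix hT q1 hq1path (SimpleGraph.Walk.start_mem_support q1)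
          hcon.2).symm
      -- closure of R
      have hclR : ∀ x ∈ R, ∀ y ∈ (pth hT z x).support, y ∈ R := by
        intro x hx y hy
        rw [hRdef, Finset.mem_sdiff] at hx ⊢
        obtain ⟨hxS, hxTv⟩ := hx
        refine ⟨hcl x hxS y hy, fun hcon => ?_⟩
        rw [hTvdef, Finset.mem_filter] at hcon
        apply hxTv
        rw [hTvdef, Finset.mem_filter]
        refine ⟨hxS, ?_⟩
        have ht : (pth hT z x).takeUntil y hy = pth hT z y :=
          pth_eq hT _ ((pth_isPath hT z x).takeUntil hy)
        have := hcon.2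
        rw [← ht] at this
        exact (pth hT z x).support_takeUntil_subset hy this
      by_cases hRsmall : R.card < r + 1
      · -- one center v suffices
        refine ⟨{v}, by simpa using hcard, fun x hx => ⟨v, Finset.mem_singleton_self v, ?_⟩⟩
        by_cases hxTv : x ∈ Tv
        · exact hTvdom x hxTv
        · have hxR : x ∈ R := by rw [hRdef, Finset.mem_sdiff]; exact ⟨hx, hxTv⟩
          -- path from x to v stays in R ∪ {v}
          set w := ((pth hT z x).reverse.append q1) with hwdef
          set bp := w.bypass with hbpdef
          have hbpp : bp.IsPath := w.bypass_isPath
          have hbplen : bp.length = G.dist x v := tree_len_eq_dist hT bp hbpp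
          have hsupsub : ∀ y ∈ bp.support, y ∈ insert v R := by
            intro y hy
            have hyw : y ∈ w.support := w.support_bypass_subset hy
            rw [hwdef] at hyw
            rcases (SimpleGraph.Walk.mem_support_append_iff _ _).mp hyw with h | h
            · rw [SimpleGraph.Walk.support_reverse, List.mem_reverse] at h
              exact Finset.mem_insert_of_mem (hclR x hxR y h)
            · by_cases hyv : y = v
              · rw [hyv]; exact Finset.mem_insert_self v R
              · refine Finset.mem_insert_of_mem ?_
                rw [hRdef, Finset.mem_sdiff]
                have hyS : y ∈ S := by
                  refine hcl u huS y ?_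
                  rw [← hpdef, ← happ]
                  exact (SimpleGraph.Walk.mem_support_append_iff _ _).mpr (Or.inl h)
                refine ⟨hyS, fun hcon => ?_⟩
                rw [hTvdef, Finset.mem_filter] at hcon
                exact hyv (mem_prefix hT q1 hq1path h hcon.2)
          have hnd : bp.support.Nodup := hbpp.support_nodup
          have hcards : bp.support.toFinset.card ≤ (insert v R).card :=
            Finset.card_le_card (fun y hy => hsupsub y (List.mem_toFinset.mp hy))
          rw [List.toFinset_card_of_nodup hnd, SimpleGraph.Walk.length_support, hbplen] at hcards
          have := Finset.card_insert_le v R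
          rw [SimpleGraph.dist_comm]
          omega
      · -- recurse on R
        push_neg at hRsmall
        have hRcard : R.card ≤ N := by
          have : R.card < S.card := by omega
          omega
        obtain ⟨D', hD1, hD2⟩ := ih R z hRcard hzR hclR hRsmall
        refine ⟨insert v D', ?_, ?_⟩
        · have h1 : (insert v D').card ≤ D'.card + 1 := Finset.card_insert_le v D'
          have h2 : (r + 1) * (insert v D').card ≤ (r + 1) * (D'.card + 1) :=
            Nat.mul_le_mul_left _ h1
          have h3 : (r + 1) * (D'.card + 1) = (r + 1) * D'.card + (r + 1) := by ring
          omega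
        · intro x hx
          by_cases hxTv : x ∈ Tv
          · exact ⟨v, Finset.mem_insert_self v D', hTvdom x hxTv⟩
          · have hxR : x ∈ R := by rw [hRdef, Finset.mem_sdiff]; exact ⟨hx, hxTv⟩
            obtain ⟨c, hc, hcd⟩ := hD2 x hxR
            exact ⟨c, Finset.mem_insert_of_mem hc, hcd⟩

end Key
theorem stmt7 {V : Type*} [Fintype V] (G : SimpleGraph V) (hT : G.IsTree)
    (n j : ℕ) (hn : Fintype.card V = n) (hj : 0 < j) (hjn : j ≤ n) :
    -- r_j(T) ≤ ⌈n/(j+1)⌉ = (n+j)/(j+1) (ℕ-division)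
    ∃ W : Finset V, W.card ≤ j ∧
      ∀ u : V, ∃ w ∈ W, G.dist w u ≤ (n + j) / (j + 1) := by
  classical
  set r := (n + j) / (j + 1) with hrdef
  have hn1 : 1 ≤ n := le_trans hj hjn
  have hVne : Nonempty V := Fintype.card_pos_iff.mp (by omega)
  obtain ⟨z⟩ := hVne
  have hr1 : 1 ≤ r := (Nat.one_le_div_iff (by omega)).mpr (by omega)
  have hnr : n ≤ (j + 1) * r := by
    have h1 := Nat.div_add_mod (n + j) (j + 1)
    have h2 : (n + j) % (j + 1) < j + 1 := Nat.mod_lt _ (by omega)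
    rw [← hrdef] at h1
    omega
  by_cases hrn : r + 1 ≤ n
  · obtain ⟨D, hc, hdom⟩ := key hT r n Finset.univ z (by rw [Finset.card_univ, hn])
      (Finset.mem_univ z) (fun x _ y _ => Finset.mem_univ y)
      (by rw [Finset.card_univ, hn]; exact hrn)
    rw [Finset.card_univ, hn] at hc
    refine ⟨D, ?_, fun u => ?_⟩
    · by_contra hcon
      push_neg at hcon
      have h1 : (r + 1) * (j + 1) ≤ (r + 1) * D.card := Nat.mul_le_mul_left _ (by omega)
      have h2 : (r + 1) * (j + 1) ≤ (j + 1) * r := h1.trans (hc.trans hnr)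
      have h3 : (r + 1) * (j + 1) = (j + 1) * r + (j + 1) := by ring
      omega
    · obtain ⟨c, hcD, hcd⟩ := hdom u (Finset.mem_univ u)
      exact ⟨c, hcD, hcd⟩
  · -- n ≤ r : any single vertex works since all distances are < n
    refine ⟨{z}, by simp; omega, fun u => ⟨z, Finset.mem_singleton_self z, ?_⟩⟩
    have hp : (pth hT z u).IsPath := pth_isPath hT z u
    have hlen : (pth hT z u).length = G.dist z u := length_pth hT z u
    have hnd : (pth hT z u).support.Nodup := hp.support_nodup
    have hcard : (pth hT z u).support.length ≤ Fintype.card V := hnd.length_le_card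
    rw [SimpleGraph.Walk.length_support, hlen, hn] at hcard
    omega
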